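/- Leftover hash lemma (classical version, with side information and events, as used for privacy amplification): Let X be a random variable over a finite set 𝒳 and Z a random variable over 𝒵, and let ℱ be a universal-2 family of hash functions from 𝒳 to {0,1}^ℓ. Let F be uniform over ℱ and independent of (X,Z). Then the statistical distance between the distribution of (F(X), F, Z) and (U, F, Z), where U is uniform on {0,1}^ℓ and independent of (F,Z), is at most (1/2)·2^{−(H_min(X|Z) − ℓ)/2}. -/

import Mathlib

open Finset


private lemma cs_abs {ι : Type*} (s : Finset ι) (f : ι → ℝ) :
    ∑ i ∈ s, |f i| ≤ Real.sqrt s.card * Real.sqrt (∑ i ∈ s, f i ^ 2) := by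
  have h := Real.sum_mul_le_sqrt_mul_sqrt s (fun _ => (1:ℝ)) (fun i => |f i|)
  simpa [sq_abs] using h

private lemma collision {𝒳 B : Type*} [Fintype 𝒳] [Fintype B] [DecidableEq B]
    (h : 𝒳 → B) (P : 𝒳 → ℝ) :
    ∑ b : B, (∑ x ∈ univ.filter (fun x => h x = b), P x) ^ 2
      = ∑ x : 𝒳, ∑ x' ∈ univ.filter (fun x' => h x' = h x), P x * P x' := by
  have key : ∀ b : B, (∑ x ∈ univ.filter (fun x => h x = b), P x) ^ 2
      = ∑ x ∈ univ.filter (fun x => h x = b),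
          ∑ x' ∈ univ.filter (fun x' => h x' = h x), P x * P x' := by
    intro b
    rw [sq, Finset.sum_mul_sum]
    refine Finset.sum_congr rfl fun x hx => ?_
    have hb : h x = b := (Finset.mem_filter.1 hx).2
    rw [hb]
  rw [Finset.sum_congr rfl fun b _ => key b]
  exact Finset.sum_fiberwise univ h _

private lemma count_swap {ℱ 𝒳 B : Type*} [Fintype ℱ] [Fintype 𝒳] [DecidableEq B]
    (hash : ℱ → 𝒳 → B) (x : 𝒳) (c : 𝒳 → ℝ) :
    ∑ f : ℱ, ∑ x' ∈ univ.filter (fun x' => hash f x' = hash f x), c x'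
      = ∑ x' : 𝒳, ((univ.filter (fun f => hash f x' = hash f x)).card : ℝ) * c x' := by
  simp_rw [Finset.sum_filter]
  rw [Finset.sum_comm]
  refine Finset.sum_congr rfl fun x' _ => ?_
  rw [← Finset.sum_filter, Finset.sum_const, nsmul_eq_mul]

private lemma key_bound {𝒳 ℱ : Type*} [Fintype 𝒳] [Fintype ℱ] [Nonempty ℱ]
    (ℓ : ℕ) (hash : ℱ → 𝒳 → (Fin ℓ → Bool))
    (huniv2 : ∀ x x' : 𝒳, x ≠ x' →
      (((univ : Finset ℱ).filter (fun f => hash f x = hash f x')).card : ℝ)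
        ≤ (Fintype.card ℱ : ℝ) / 2 ^ ℓ)
    (P : 𝒳 → ℝ) (hP : ∀ x, 0 ≤ P x) (m : ℝ) (hm0 : 0 ≤ m) (hm : ∀ x, P x ≤ m) :
    ∑ b : Fin ℓ → Bool, ∑ f : ℱ,
        |(∑ x ∈ univ.filter (fun x => hash f x = b), P x) - (1 / 2 ^ ℓ) * ∑ x, P x|
      ≤ (Fintype.card ℱ : ℝ) *
          (Real.sqrt (2 ^ ℓ) * (Real.sqrt m * Real.sqrt (∑ x, P x))) := by
  classical
  set N : ℝ := (Fintype.card ℱ : ℝ) with hNdef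
  have hN0 : 0 < N := by rw [hNdef]; exact_mod_cast Fintype.card_pos
  set S : ℝ := ∑ x, P x with hSdef
  have hS0 : 0 ≤ S := Finset.sum_nonneg fun x _ => hP x
  set q : ℱ → (Fin ℓ → Bool) → ℝ :=
    fun f b => ∑ x ∈ univ.filter (fun x => hash f x = b), P x with hqdef
  have h2l : (0:ℝ) < 2 ^ ℓ := by positivity
  have hcardB : ((Fintype.card (Fin ℓ → Bool)) : ℝ) = 2 ^ ℓ := by
    simp [Fintype.card_fun]
  have hq_tot : ∀ f, ∑ b, q f b = S := fun f => Finset.sum_fiberwise univ (hash f) P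
  -- Step 1 : Cauchy-Schwarz over (b, f)
  have cs : ∑ b : Fin ℓ → Bool, ∑ f : ℱ, |q f b - (1 / 2 ^ ℓ) * S|
      ≤ Real.sqrt (2 ^ ℓ * N) *
        Real.sqrt (∑ b : Fin ℓ → Bool, ∑ f : ℱ, (q f b - (1 / 2 ^ ℓ) * S) ^ 2) := by
    have h := cs_abs (univ : Finset ((Fin ℓ → Bool) × ℱ))
      (fun bf => q bf.2 bf.1 - (1 / 2 ^ ℓ) * S)
    have hcard : (((univ : Finset ((Fin ℓ → Bool) × ℱ)).card : ℕ) : ℝ) = 2 ^ ℓ * N := by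
      rw [Finset.card_univ, Fintype.card_prod]
      push_cast [hcardB.symm]
      ring
    rw [hcard] at h
    simpa [Fintype.sum_prod_type] using h
  -- Step 2 : expansion per f
  have expand : ∀ f : ℱ, ∑ b, (q f b - (1 / 2 ^ ℓ) * S) ^ 2
      = (∑ b, q f b ^ 2) - 2 * ((1 / 2 ^ ℓ) * S) * S + 2 ^ ℓ * ((1 / 2 ^ ℓ) * S) ^ 2 := by
    intro f
    have h1 : ∀ b, (q f b - (1 / 2 ^ ℓ) * S) ^ 2
        = q f b ^ 2 - 2 * ((1 / 2 ^ ℓ) * S) * (q f b) + ((1 / 2 ^ ℓ) * S) ^ 2 := fun b => by ring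
    simp_rw [h1]
    rw [Finset.sum_add_distrib, Finset.sum_sub_distrib, ← Finset.mul_sum, hq_tot f,
      Finset.sum_const, Finset.card_univ, nsmul_eq_mul, hcardB]
  -- Step 3 : collision bound
  have hsq : ∑ x, P x ^ 2 ≤ m * S := by
    rw [hSdef, Finset.mul_sum]
    refine Finset.sum_le_sum fun x _ => ?_
    have h1 := hm x; have h2 := hP x; nlinarith
  have hC : ∑ f : ℱ, ∑ b, q f b ^ 2 ≤ N * (m * S) + N / 2 ^ ℓ * (S * S) := by
    have step : ∑ f : ℱ, ∑ b, q f b ^ 2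
        = ∑ x : 𝒳, ∑ x' : 𝒳,
            ((univ.filter (fun f => hash f x' = hash f x)).card : ℝ) * (P x * P x') := by
      calc ∑ f : ℱ, ∑ b, q f b ^ 2
          = ∑ f : ℱ, ∑ x : 𝒳,
              ∑ x' ∈ univ.filter (fun x' => hash f x' = hash f x), P x * P x' :=
            Finset.sum_congr rfl fun f _ => collision (hash f) P
        _ = ∑ x : 𝒳, ∑ f : ℱ,
              ∑ x' ∈ univ.filter (fun x' => hash f x' = hash f x), P x * P x' :=
            Finset.sum_comm
        _ = _ := Finset.sum_congr rfl fun x _ => count_swap hash x _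
    rw [step]
    have bound : ∀ x : 𝒳, ∑ x' : 𝒳,
        ((univ.filter (fun f => hash f x' = hash f x)).card : ℝ) * (P x * P x')
        ≤ N * P x ^ 2 + N / 2 ^ ℓ * (P x * S) := by
      intro x
      rw [← Finset.add_sum_erase _ _ (Finset.mem_univ x)]
      have hdiag : ((univ.filter (fun f => hash f x = hash f x)).card : ℝ) = N := by
        rw [hNdef]
        norm_cast
        rw [Finset.filter_true_of_mem fun f _ => rfl, Finset.card_univ]
      rw [hdiag]
      have h2 : ∑ x' ∈ univ.erase x,
          ((univ.filter (fun f => hash f x' = hash f x)).card : ℝ) * (P x * P x')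
          ≤ ∑ x' ∈ univ.erase x, N / 2 ^ ℓ * (P x * P x') :=
        Finset.sum_le_sum fun x' hx' =>
          mul_le_mul_of_nonneg_right (huniv2 x' x (Finset.ne_of_mem_erase hx'))
            (mul_nonneg (hP x) (hP x'))
      have h3 : ∑ x' ∈ univ.erase x, N / 2 ^ ℓ * (P x * P x') ≤ N / 2 ^ ℓ * (P x * S) := by
        have : ∑ x' ∈ univ.erase x, N / 2 ^ ℓ * (P x * P x')
            = N / 2 ^ ℓ * (P x * ∑ x' ∈ univ.erase x, P x') := by
          rw [Finset.mul_sum, Finset.mul_sum]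
        rw [this]
        have hle : ∑ x' ∈ univ.erase x, P x' ≤ S := by
          rw [hSdef]
          exact Finset.sum_le_sum_of_subset_of_nonneg (Finset.subset_univ _)
            fun x' _ _ => hP x'
        have := mul_le_mul_of_nonneg_left hle (hP x)
        have h4 : 0 ≤ N / 2 ^ ℓ := by positivity
        nlinarith
      have e : N * (P x * P x) = N * P x ^ 2 := by ring
      linarith [h2.trans h3]
    calc ∑ x : 𝒳, ∑ x' : 𝒳,
          ((univ.filter (fun f => hash f x' = hash f x)).card : ℝ) * (P x * P x')
        ≤ ∑ x : 𝒳, (N * P x ^ 2 + N / 2 ^ ℓ * (P x * S)) :=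
          Finset.sum_le_sum fun x _ => bound x
      _ = N * (∑ x, P x ^ 2) + N / 2 ^ ℓ * (S * S) := by
          rw [Finset.sum_add_distrib, ← Finset.mul_sum, ← Finset.mul_sum, ← Finset.sum_mul,
            ← hSdef]
      _ ≤ N * (m * S) + N / 2 ^ ℓ * (S * S) := by nlinarith
  -- Step 4 : variance bound
  have hV : ∑ b : Fin ℓ → Bool, ∑ f : ℱ, (q f b - (1 / 2 ^ ℓ) * S) ^ 2 ≤ N * (m * S) := by
    rw [Finset.sum_comm]
    have e0 : ∑ f : ℱ, ∑ b, (q f b - (1 / 2 ^ ℓ) * S) ^ 2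
        = (∑ f : ℱ, ∑ b, q f b ^ 2) - N * (2 * ((1 / 2 ^ ℓ) * S) * S)
          + N * (2 ^ ℓ * ((1 / 2 ^ ℓ) * S) ^ 2) := by
      rw [Finset.sum_congr rfl fun f (_ : f ∈ univ) => expand f,
        Finset.sum_add_distrib, Finset.sum_sub_distrib, Finset.sum_const, Finset.sum_const,
        Finset.card_univ, nsmul_eq_mul, nsmul_eq_mul, ← hNdef]
    rw [e0]
    have e1 : 2 * ((1 / 2 ^ ℓ) * S) * S = 2 * (S * S) / 2 ^ ℓ := by ring
    have e2 : (2:ℝ) ^ ℓ * ((1 / 2 ^ ℓ) * S) ^ 2 = S * S / 2 ^ ℓ := by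
      field_simp
    rw [e1, e2]
    have h4 : 0 ≤ N / 2 ^ ℓ * (S * S) := by positivity
    have : N * (2 * (S * S) / 2 ^ ℓ) - N * (S * S / 2 ^ ℓ) = N / 2 ^ ℓ * (S * S) := by ring
    linarith [hC]
  -- Step 5 : conclude
  have hfin : Real.sqrt (2 ^ ℓ * N) * Real.sqrt (N * (m * S))
      = N * (Real.sqrt (2 ^ ℓ) * (Real.sqrt m * Real.sqrt S)) := by
    rw [← Real.sqrt_mul (by positivity)]
    rw [show (2:ℝ) ^ ℓ * N * (N * (m * S)) = (N * N) * (2 ^ ℓ * (m * S)) by ring]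
    rw [Real.sqrt_mul (by positivity), Real.sqrt_mul_self hN0.le,
      Real.sqrt_mul (by positivity), Real.sqrt_mul hm0]
  calc ∑ b : Fin ℓ → Bool, ∑ f : ℱ, |q f b - (1 / 2 ^ ℓ) * S|
      ≤ Real.sqrt (2 ^ ℓ * N) *
        Real.sqrt (∑ b : Fin ℓ → Bool, ∑ f : ℱ, (q f b - (1 / 2 ^ ℓ) * S) ^ 2) := cs
    _ ≤ Real.sqrt (2 ^ ℓ * N) * Real.sqrt (N * (m * S)) :=
        mul_le_mul_of_nonneg_left (Real.sqrt_le_sqrt hV) (Real.sqrt_nonneg _)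
    _ = N * (Real.sqrt (2 ^ ℓ) * (Real.sqrt m * Real.sqrt S)) := hfin

private lemma fiber_sum {Ω 𝒳 : Type*} [Fintype Ω] [Fintype 𝒳] [DecidableEq 𝒳]
    (p : Ω → ℝ) (X : Ω → 𝒳) (q : 𝒳 → Prop) [DecidablePred q] (r : Ω → Prop) [DecidablePred r] :
    ∑ ω ∈ univ.filter (fun ω => q (X ω) ∧ r ω), p ω
      = ∑ x ∈ univ.filter q, ∑ ω ∈ univ.filter (fun ω => X ω = x ∧ r ω), p ω := by
  rw [← Finset.sum_fiberwise (univ.filter (fun ω => q (X ω) ∧ r ω)) X p]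
  calc ∑ x : 𝒳, ∑ ω ∈ (univ.filter (fun ω => q (X ω) ∧ r ω)).filter (fun ω => X ω = x), p ω
      = ∑ x ∈ univ.filter q, ∑ ω ∈ (univ.filter (fun ω => q (X ω) ∧ r ω)).filter (fun ω => X ω = x), p ω := by
        refine (Finset.sum_subset (Finset.filter_subset _ _) fun x _ hx => ?_).symm
        have hqx : ¬ q x := by simpa using hx
        refine Finset.sum_eq_zero fun ω hω => ?_
        simp only [Finset.mem_filter, Finset.mem_univ, true_and] at hω
        exact absurd (hω.2 ▸ hω.1.1) hqx
    _ = ∑ x ∈ univ.filter q, ∑ ω ∈ univ.filter (fun ω => X ω = x ∧ r ω), p ω := by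
        refine Finset.sum_congr rfl fun x hx => ?_
        have hqx : q x := (Finset.mem_filter.1 hx).2
        refine Finset.sum_congr ?_ fun _ _ => rfl
        ext ω
        simp only [Finset.mem_filter, Finset.mem_univ, true_and]
        constructor
        · rintro ⟨⟨_, hr⟩, hX⟩; exact ⟨hX, hr⟩
        · rintro ⟨hX, hr⟩; exact ⟨⟨hX ▸ hqx, hr⟩, hX⟩


private lemma sum_P_eq_S {Ω 𝒳 𝒵 : Type*} [Fintype Ω] [Fintype 𝒳] [DecidableEq 𝒳] [DecidableEq 𝒵]
    (p : Ω → ℝ) (X : Ω → 𝒳) (Z : Ω → 𝒵) (z : 𝒵) :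
    ∑ x : 𝒳, (∑ ω ∈ univ.filter (fun ω => X ω = x ∧ Z ω = z), p ω)
      = ∑ ω ∈ univ.filter (fun ω => Z ω = z), p ω := by
  rw [← Finset.sum_fiberwise (univ.filter (fun ω => Z ω = z)) X p]
  refine Finset.sum_congr rfl fun x _ => Finset.sum_congr ?_ fun _ _ => rfl
  ext ω
  simp only [Finset.mem_filter, Finset.mem_univ, true_and]
  tauto

private lemma key_z {Ω 𝒳 𝒵 ℱ : Type*} [Fintype Ω] [Fintype 𝒳] [Fintype 𝒵] [Fintype ℱ]
    [Nonempty 𝒳] [Nonempty ℱ] [DecidableEq 𝒳] [DecidableEq 𝒵]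
    (ℓ : ℕ) (p : Ω → ℝ) (hp : ∀ ω, 0 ≤ p ω)
    (X : Ω → 𝒳) (Z : Ω → 𝒵)
    (hash : ℱ → 𝒳 → (Fin ℓ → Bool))
    (huniv2 : ∀ x x' : 𝒳, x ≠ x' →
      (((univ : Finset ℱ).filter (fun f => hash f x = hash f x')).card : ℝ)
        ≤ (Fintype.card ℱ : ℝ) / 2 ^ ℓ) (z : 𝒵) :
    ∑ b : Fin ℓ → Bool, ∑ f : ℱ,
        |(∑ ω ∈ univ.filter (fun ω => hash f (X ω) = b ∧ Z ω = z), p ω)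
          - (1 / 2 ^ ℓ) * (∑ ω ∈ univ.filter (fun ω => Z ω = z), p ω)|
      ≤ (Fintype.card ℱ : ℝ) * (Real.sqrt (2 ^ ℓ) *
          (Real.sqrt ((univ : Finset 𝒳).sup' univ_nonempty
              (fun x => ∑ ω ∈ univ.filter (fun ω => X ω = x ∧ Z ω = z), p ω))
            * Real.sqrt (∑ ω ∈ univ.filter (fun ω => Z ω = z), p ω))) := by
  classical
  set P : 𝒳 → ℝ := fun x => ∑ ω ∈ univ.filter (fun ω => X ω = x ∧ Z ω = z), p ω with hPdef
  have hP : ∀ x, 0 ≤ P x := fun x => Finset.sum_nonneg fun ω _ => hp ω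
  have hPS : ∑ x, P x = ∑ ω ∈ univ.filter (fun ω => Z ω = z), p ω := sum_P_eq_S p X Z z
  set m : ℝ := (univ : Finset 𝒳).sup' univ_nonempty P with hmdef
  have hm : ∀ x, P x ≤ m := fun x => Finset.le_sup' P (Finset.mem_univ x)
  have hm0 : 0 ≤ m := le_trans (hP (Classical.arbitrary 𝒳)) (hm _)
  have hq : ∀ (f : ℱ) (b : Fin ℓ → Bool),
      (∑ ω ∈ univ.filter (fun ω => hash f (X ω) = b ∧ Z ω = z), p ω)
        = ∑ x ∈ univ.filter (fun x => hash f x = b), P x := fun f b =>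
    fiber_sum p X (fun x => hash f x = b) (fun ω => Z ω = z)
  have goal_eq : ∑ b : Fin ℓ → Bool, ∑ f : ℱ,
        |(∑ ω ∈ univ.filter (fun ω => hash f (X ω) = b ∧ Z ω = z), p ω)
          - (1 / 2 ^ ℓ) * (∑ ω ∈ univ.filter (fun ω => Z ω = z), p ω)|
      = ∑ b : Fin ℓ → Bool, ∑ f : ℱ,
        |(∑ x ∈ univ.filter (fun x => hash f x = b), P x) - (1 / 2 ^ ℓ) * ∑ x, P x| := by
    refine Finset.sum_congr rfl fun b _ => Finset.sum_congr rfl fun f _ => ?_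
    rw [hq f b, ← hPS]
  rw [goal_eq, ← hPS]
  exact key_bound ℓ hash huniv2 P hP m hm0 hm

/-- Leftover hash lemma (classical, with side information): if `ℱ` is a universal-2
family of hash functions `𝒳 → {0,1}^ℓ` and `F` is uniform over `ℱ` and independent of
`(X, Z)` (modeled by the product probability space `Ω × ℱ`), then the distribution of
`(F(X), F, Z)` is within statistical distance `(1/2)·2^{-(H_min(X|Z) - ℓ)/2}` of
`(U, F, Z)` with `U` uniform on `{0,1}^ℓ`. -/
theorem leftover_hash_lemma
    {Ω 𝒳 𝒵 ℱ : Type*} [Fintype Ω] [Fintype 𝒳] [Fintype 𝒵] [Fintype ℱ]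
    [Nonempty 𝒳] [Nonempty ℱ] [DecidableEq 𝒳] [DecidableEq 𝒵]
    (ℓ : ℕ)
    (p : Ω → ℝ) (hp : ∀ ω, 0 ≤ p ω) (hsum : ∑ ω, p ω = 1)
    (X : Ω → 𝒳) (Z : Ω → 𝒵)
    (hash : ℱ → 𝒳 → (Fin ℓ → Bool))
    (huniv2 : ∀ x x' : 𝒳, x ≠ x' →
      (((univ : Finset ℱ).filter (fun f => hash f x = hash f x')).card : ℝ)
        ≤ (Fintype.card ℱ : ℝ) / 2 ^ ℓ) :
    (1 / 2) * ∑ b : Fin ℓ → Bool, ∑ f : ℱ, ∑ z : 𝒵,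
        |(∑ ω ∈ univ.filter (fun ω => hash f (X ω) = b ∧ Z ω = z), p ω)
              / (Fintype.card ℱ : ℝ)
          - (1 / 2 ^ ℓ) * (∑ ω ∈ univ.filter (fun ω => Z ω = z), p ω)
              / (Fintype.card ℱ : ℝ)|
      ≤ (1 / 2) * (2:ℝ) ^
          (-(((- Real.logb 2 (∑ z, (univ : Finset 𝒳).sup' univ_nonempty (fun x =>
                ∑ ω ∈ univ.filter (fun ω => X ω = x ∧ Z ω = z), p ω))) - ℓ) / 2)) := by
  classical
  have hN0 : (0:ℝ) < (Fintype.card ℱ : ℝ) := by exact_mod_cast Fintype.card_pos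
  set N : ℝ := (Fintype.card ℱ : ℝ) with hNdef
  set M : ℝ := ∑ z : 𝒵, (univ : Finset 𝒳).sup' univ_nonempty (fun x =>
      ∑ ω ∈ univ.filter (fun ω => X ω = x ∧ Z ω = z), p ω) with hMdef
  -- abbreviations (function-level, not folded in the goal)
  have hS0 : ∀ z : 𝒵, (0:ℝ) ≤ ∑ ω ∈ univ.filter (fun ω => Z ω = z), p ω :=
    fun z => Finset.sum_nonneg fun ω _ => hp ω
  have hm0 : ∀ z : 𝒵, (0:ℝ) ≤ (univ : Finset 𝒳).sup' univ_nonempty (fun x =>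
      ∑ ω ∈ univ.filter (fun ω => X ω = x ∧ Z ω = z), p ω) := by
    intro z
    refine le_trans (Finset.sum_nonneg fun ω _ => hp ω)
      (Finset.le_sup' (fun x => ∑ ω ∈ univ.filter (fun ω => X ω = x ∧ Z ω = z), p ω)
        (Finset.mem_univ (Classical.arbitrary 𝒳)))
  have hSsum : ∑ z : 𝒵, ∑ ω ∈ univ.filter (fun ω => Z ω = z), p ω = 1 :=
    (Finset.sum_fiberwise univ Z p).trans hsum
  -- M is positive
  have hX0 : (0:ℝ) < (Fintype.card 𝒳 : ℝ) := by exact_mod_cast Fintype.card_pos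
  have hM1 : (1:ℝ) ≤ (Fintype.card 𝒳 : ℝ) * M := by
    rw [hMdef, Finset.mul_sum]
    rw [← hSsum]
    refine Finset.sum_le_sum fun z _ => ?_
    rw [← sum_P_eq_S p X Z z]
    calc ∑ x : 𝒳, (∑ ω ∈ univ.filter (fun ω => X ω = x ∧ Z ω = z), p ω)
        ≤ ∑ _x : 𝒳, (univ : Finset 𝒳).sup' univ_nonempty (fun x =>
            ∑ ω ∈ univ.filter (fun ω => X ω = x ∧ Z ω = z), p ω) :=
          Finset.sum_le_sum fun x _ => Finset.le_sup'
            (fun x => ∑ ω ∈ univ.filter (fun ω => X ω = x ∧ Z ω = z), p ω) (Finset.mem_univ x)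
      _ = (Fintype.card 𝒳 : ℝ) * _ := by
          rw [Finset.sum_const, Finset.card_univ, nsmul_eq_mul]
  have hMpos : (0:ℝ) < M := by nlinarith
  have hM0 : (0:ℝ) ≤ M := hMpos.le
  -- Step A: pull out the 1/N factor
  have habs : ∀ a c : ℝ, |a / N - 1 / 2 ^ ℓ * c / N| = |a - 1 / 2 ^ ℓ * c| / N := by
    intro a c
    rw [div_sub_div_same, abs_div, abs_of_pos hN0]
  simp_rw [habs, ← Finset.sum_div]
  -- Step B: swap the sums
  have hswap : ∑ b : Fin ℓ → Bool, ∑ f : ℱ, ∑ z : 𝒵,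
        |(∑ ω ∈ univ.filter (fun ω => hash f (X ω) = b ∧ Z ω = z), p ω)
          - 1 / 2 ^ ℓ * (∑ ω ∈ univ.filter (fun ω => Z ω = z), p ω)|
      = ∑ z : 𝒵, ∑ b : Fin ℓ → Bool, ∑ f : ℱ,
        |(∑ ω ∈ univ.filter (fun ω => hash f (X ω) = b ∧ Z ω = z), p ω)
          - 1 / 2 ^ ℓ * (∑ ω ∈ univ.filter (fun ω => Z ω = z), p ω)| :=
    (Finset.sum_congr rfl fun b _ => Finset.sum_comm).trans Finset.sum_comm
  rw [hswap]
  -- Step C/D: apply key_z and Cauchy-Schwarz over z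
  have hz : ∑ z : 𝒵, ∑ b : Fin ℓ → Bool, ∑ f : ℱ,
        |(∑ ω ∈ univ.filter (fun ω => hash f (X ω) = b ∧ Z ω = z), p ω)
          - 1 / 2 ^ ℓ * (∑ ω ∈ univ.filter (fun ω => Z ω = z), p ω)|
      ≤ ∑ z : 𝒵, N * (Real.sqrt (2 ^ ℓ) *
          (Real.sqrt ((univ : Finset 𝒳).sup' univ_nonempty (fun x =>
              ∑ ω ∈ univ.filter (fun ω => X ω = x ∧ Z ω = z), p ω))
            * Real.sqrt (∑ ω ∈ univ.filter (fun ω => Z ω = z), p ω))) :=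
    Finset.sum_le_sum fun z _ => key_z ℓ p hp X Z hash huniv2 z
  have hcs : ∑ z : 𝒵, Real.sqrt ((univ : Finset 𝒳).sup' univ_nonempty (fun x =>
          ∑ ω ∈ univ.filter (fun ω => X ω = x ∧ Z ω = z), p ω))
        * Real.sqrt (∑ ω ∈ univ.filter (fun ω => Z ω = z), p ω)
      ≤ Real.sqrt M := by
    have h := Real.sum_sqrt_mul_sqrt_le (univ : Finset 𝒵) hm0 hS0
    rw [hSsum, Real.sqrt_one, mul_one, ← hMdef] at h
    exact h
  -- combine
  have main : (1:ℝ)/2 * ((∑ z : 𝒵, ∑ b : Fin ℓ → Bool, ∑ f : ℱ,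
        |(∑ ω ∈ univ.filter (fun ω => hash f (X ω) = b ∧ Z ω = z), p ω)
          - 1 / 2 ^ ℓ * (∑ ω ∈ univ.filter (fun ω => Z ω = z), p ω)|) / N)
      ≤ 1/2 * Real.sqrt (2 ^ ℓ * M) := by
    have e1 : ∑ z : 𝒵, N * (Real.sqrt (2 ^ ℓ) *
          (Real.sqrt ((univ : Finset 𝒳).sup' univ_nonempty (fun x =>
              ∑ ω ∈ univ.filter (fun ω => X ω = x ∧ Z ω = z), p ω))
            * Real.sqrt (∑ ω ∈ univ.filter (fun ω => Z ω = z), p ω)))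
        = N * Real.sqrt (2 ^ ℓ) * ∑ z : 𝒵,
            Real.sqrt ((univ : Finset 𝒳).sup' univ_nonempty (fun x =>
              ∑ ω ∈ univ.filter (fun ω => X ω = x ∧ Z ω = z), p ω))
            * Real.sqrt (∑ ω ∈ univ.filter (fun ω => Z ω = z), p ω) := by
      rw [Finset.mul_sum]
      exact Finset.sum_congr rfl fun z _ => by ring
    have h1 : ∑ z : 𝒵, N * (Real.sqrt (2 ^ ℓ) *
          (Real.sqrt ((univ : Finset 𝒳).sup' univ_nonempty (fun x =>
              ∑ ω ∈ univ.filter (fun ω => X ω = x ∧ Z ω = z), p ω))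
            * Real.sqrt (∑ ω ∈ univ.filter (fun ω => Z ω = z), p ω)))
        ≤ N * Real.sqrt (2 ^ ℓ) * Real.sqrt M :=
      e1.trans_le (mul_le_mul_of_nonneg_left hcs (by positivity))
    have h2 := hz.trans h1
    have h3 : (∑ z : 𝒵, ∑ b : Fin ℓ → Bool, ∑ f : ℱ,
        |(∑ ω ∈ univ.filter (fun ω => hash f (X ω) = b ∧ Z ω = z), p ω)
          - 1 / 2 ^ ℓ * (∑ ω ∈ univ.filter (fun ω => Z ω = z), p ω)|) / N
        ≤ Real.sqrt (2 ^ ℓ) * Real.sqrt M := by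
      rw [div_le_iff₀ hN0]
      calc _ ≤ N * Real.sqrt (2 ^ ℓ) * Real.sqrt M := h2
        _ = Real.sqrt (2 ^ ℓ) * Real.sqrt M * N := by ring
    have h4 : Real.sqrt (2 ^ ℓ) * Real.sqrt M = Real.sqrt (2 ^ ℓ * M) :=
      (Real.sqrt_mul (by positivity) M).symm
    linarith [h3, h4]
  refine main.trans ?_
  -- Step E: identify the RHS
  have hrhs : Real.sqrt (2 ^ ℓ * M)
      = (2:ℝ) ^ (-((- Real.logb 2 M - (ℓ:ℝ)) / 2)) := by
    have h1 : (2:ℝ) ^ ℓ * M = (2:ℝ) ^ ((ℓ:ℝ) + Real.logb 2 M) := by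
      rw [Real.rpow_add two_pos, Real.rpow_natCast,
        Real.rpow_logb two_pos (by norm_num) hMpos]
    rw [h1, Real.sqrt_eq_rpow, ← Real.rpow_mul two_pos.le]
    congr 1
    ring
  rw [hrhs]
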